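/- The merge operator on local types is associative: for all local types T1, T2, T3, if (T1 ⊔ T2) ⊔ T3 is defined then T1 ⊔ (T2 ⊔ T3) is defined and the two are equal (and symmetrically). -/
import Mathlib


/-- Local types T ::= end | base B | p?{lᵢ⟨Uᵢ⟩.Tᵢ} | p!{lᵢ⟨Uᵢ⟩.Tᵢ} | ∀α.T | ∃α.T | @_ω T | ↓α.T.
Payload types U (base types or local types) are embedded into local types via `base`.
Branchings/selections are represented as functions from labels to optional
(payload, continuation) pairs, which makes the pairwise-distinctness of labels implicit. -/
inductive LocalTy where
  | endT : LocalTy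
  | base : String → LocalTy
  | recv : String → (String → Option (LocalTy × LocalTy)) → LocalTy
  | send : String → (String → Option (LocalTy × LocalTy)) → LocalTy
  | all  : String → LocalTy → LocalTy
  | ex   : String → LocalTy → LocalTy
  | att  : String → LocalTy → LocalTy
  | here : String → LocalTy → LocalTy

mutual
/-- The partial merge operator: `Merge T1 T2 T` means T1 ⊔ T2 is defined and equals T.
B ⊔ B = B for base types; T ⊔ T = T for end, selection, @, ∀, ∃ types; branching types
from the same participant merge by taking the union of branches, recursively merging
payloads and continuations on common labels; undefined otherwise. -/
inductive Merge : LocalTy → LocalTy → LocalTy → Prop where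
  | endT : Merge .endT .endT .endT
  | base (b : String) : Merge (.base b) (.base b) (.base b)
  | send (p : String) (f : String → Option (LocalTy × LocalTy)) :
      Merge (.send p f) (.send p f) (.send p f)
  | all (a : String) (T : LocalTy) : Merge (.all a T) (.all a T) (.all a T)
  | ex (a : String) (T : LocalTy) : Merge (.ex a T) (.ex a T) (.ex a T)
  | att (w : String) (T : LocalTy) : Merge (.att w T) (.att w T) (.att w T)
  | recv (p : String) (f g h : String → Option (LocalTy × LocalTy)) :
      (∀ l, MergeO (f l) (g l) (h l)) → Merge (.recv p f) (.recv p g) (.recv p h)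

/-- Merge of optional branches: a label present on only one side is kept as is;
a common label merges payloads and continuations. -/
inductive MergeO : Option (LocalTy × LocalTy) → Option (LocalTy × LocalTy) →
    Option (LocalTy × LocalTy) → Prop where
  | none : MergeO none none none
  | left (b : LocalTy × LocalTy) : MergeO (some b) none (some b)
  | right (b : LocalTy × LocalTy) : MergeO none (some b) (some b)
  | both {U1 T1 U2 T2 U T : LocalTy} :
      Merge U1 U2 U → Merge T1 T2 T →
      MergeO (some (U1, T1)) (some (U2, T2)) (some (U, T))
end



theorem assocA : ∀ {T1 T2 T12 : LocalTy}, Merge T1 T2 T12 →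
    ∀ T3 T, Merge T12 T3 T → ∃ T23, Merge T2 T3 T23 ∧ Merge T1 T23 T := by
  intro T1 T2 T12 h
  refine Merge.rec
    (motive_1 := fun a b c _ => ∀ T3 T, Merge c T3 T →
      ∃ T23, Merge b T3 T23 ∧ Merge a T23 T)
    (motive_2 := fun o1 o2 o12 _ => ∀ o3 o, MergeO o12 o3 o →
      ∃ o23, MergeO o2 o3 o23 ∧ MergeO o1 o23 o)
    ?_ ?_ ?_ ?_ ?_ ?_ ?_ ?_ ?_ ?_ ?_ h
  · intro T3 T hm; cases hm; exact ⟨_, .endT, .endT⟩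
  · intro b T3 T hm; cases hm; exact ⟨_, .base b, .base b⟩
  · intro p f T3 T hm; cases hm; exact ⟨_, .send p f, .send p f⟩
  · intro a T T3 T' hm; cases hm; exact ⟨_, .all a T, .all a T⟩
  · intro a T T3 T' hm; cases hm; exact ⟨_, .ex a T, .ex a T⟩
  · intro w T T3 T' hm; cases hm; exact ⟨_, .att w T, .att w T⟩
  · intro p f g hh _ ih T3 T hm
    cases hm with
    | recv _ _ f3 h' hall =>
      choose k hk1 hk2 using fun l => ih l (f3 l) (h' l) (hall l)
      exact ⟨_, .recv p g f3 k hk1, .recv p f k h' hk2⟩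
  · intro o3 o hm
    cases hm with
    | none => exact ⟨none, .none, .none⟩
    | right b => exact ⟨some b, .right b, .right b⟩
  · intro b o3 o hm
    cases hm with
    | left => exact ⟨none, .none, .left b⟩
    | both hU hT => exact ⟨_, .right _, .both hU hT⟩
  · intro b o3 o hm
    cases hm with
    | left => exact ⟨some b, .left b, .right _⟩
    | both hU hT => exact ⟨_, .both hU hT, .right _⟩
  · intro U1 T1 U2 T2 U T hU hT ihU ihT o3 o hm
    cases hm with
    | left => exact ⟨some (U2, T2), .left _, .both hU hT⟩
    | both hU' hT' =>
      obtain ⟨U23, hU23a, hU23b⟩ := ihU _ _ hU'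
      obtain ⟨T23, hT23a, hT23b⟩ := ihT _ _ hT'
      exact ⟨some (U23, T23), .both hU23a hT23a, .both hU23b hT23b⟩

theorem assocB : ∀ {T2 T3 T23 : LocalTy}, Merge T2 T3 T23 →
    ∀ T1 T, Merge T1 T23 T → ∃ T12, Merge T1 T2 T12 ∧ Merge T12 T3 T := by
  intro T2 T3 T23 h
  refine Merge.rec
    (motive_1 := fun b c d _ => ∀ T1 T, Merge T1 d T →
      ∃ T12, Merge T1 b T12 ∧ Merge T12 c T)
    (motive_2 := fun o2 o3 o23 _ => ∀ o1 o, MergeO o1 o23 o →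
      ∃ o12, MergeO o1 o2 o12 ∧ MergeO o12 o3 o)
    ?_ ?_ ?_ ?_ ?_ ?_ ?_ ?_ ?_ ?_ ?_ h
  · intro T1 T hm; cases hm; exact ⟨_, .endT, .endT⟩
  · intro b T1 T hm; cases hm; exact ⟨_, .base b, .base b⟩
  · intro p f T1 T hm; cases hm; exact ⟨_, .send p f, .send p f⟩
  · intro a T T1 T' hm; cases hm; exact ⟨_, .all a T, .all a T⟩
  · intro a T T1 T' hm; cases hm; exact ⟨_, .ex a T, .ex a T⟩
  · intro w T T1 T' hm; cases hm; exact ⟨_, .att w T, .att w T⟩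
  · intro p f g hh _ ih T1 T hm
    cases hm with
    | recv _ f1 _ h' hall =>
      choose k hk1 hk2 using fun l => ih l (f1 l) (h' l) (hall l)
      exact ⟨_, .recv p f1 f k hk1, .recv p k g h' hk2⟩
  · intro o1 o hm
    cases hm with
    | none => exact ⟨none, .none, .none⟩
    | left b => exact ⟨some b, .left b, .left b⟩
  · intro b o1 o hm
    cases hm with
    | right => exact ⟨some b, .right b, .left b⟩
    | both hU hT => exact ⟨_, .both hU hT, .left _⟩
  · intro b o1 o hm
    cases hm with
    | right => exact ⟨none, .none, .right b⟩
    | both hU hT => exact ⟨_, .left _, .both hU hT⟩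
  · intro U2 T2 U3 T3 U T hU hT ihU ihT o1 o hm
    cases hm with
    | right => exact ⟨some (U2, T2), .right _, .both hU hT⟩
    | both hU' hT' =>
      obtain ⟨U12, hU12a, hU12b⟩ := ihU _ _ hU'
      obtain ⟨T12, hT12a, hT12b⟩ := ihT _ _ hT'
      exact ⟨some (U12, T12), .both hU12a hT12a, .both hU12b hT12b⟩

/-- the merge operator is associative: if (T1 ⊔ T2) ⊔ T3 is defined
then T1 ⊔ (T2 ⊔ T3) is defined and the two are equal, and symmetrically. -/
theorem merge_assoc (T1 T2 T3 : LocalTy) :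
    (∀ T12 T, Merge T1 T2 T12 → Merge T12 T3 T →
      ∃ T23, Merge T2 T3 T23 ∧ Merge T1 T23 T) ∧
    (∀ T23 T, Merge T2 T3 T23 → Merge T1 T23 T →
      ∃ T12, Merge T1 T2 T12 ∧ Merge T12 T3 T) := by
  exact ⟨fun T12 T h1 h2 => assocA h1 T3 T h2,
    fun T23 T h1 h2 => assocB h1 T1 T h2⟩
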